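/- arXiv:2503.01282 — 2 statements merged into one kernel-verified Lean document; each statement's English description precedes it below -/
import Mathlib

section
/- Per-step bound on the smooth part (inequality (feq)). Suppose f_k is convex and differentiable, x_{k+1} minimizes x ↦ f_k(x) + w_kᵀ(x − ν_k) + (ρ/2)‖x − ν_k‖² + (η/2)‖x − x_k‖²_{P_k⁻¹}, w_{k+1} = w_k + ρ(x_{k+1} − ν_{k+1}), and x⋆ = ν⋆. Then f_k(x_{k+1}) − f_k(x⋆) ≤ ∇f_k(x_{k+1})ᵀ(x_{k+1} − x⋆) = −w_{k+1}ᵀ(x_{k+1} − ν⋆) + (ρ/2)(‖ν⋆ − ν_k‖² − ‖ν⋆ − ν_{k+1}‖² + ‖x_{k+1} − ν_{k+1}‖² − ‖x_{k+1} − ν_k‖²) + (η/2)(‖x⋆ − x_k‖²_{P_k⁻¹} − ‖x⋆ − x_{k+1}‖²_{P_k⁻¹} − ‖x_{k+1} − x_k‖²_{P_k⁻¹}). -/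
open Finset Matrix
open scoped RealInnerProductSpace

/-- Action of a matrix on a Euclidean vector. -/
noncomputable def act {ι κ : Type*} [Fintype ι] [Fintype κ] (A : Matrix ι κ ℝ)
    (v : EuclideanSpace ℝ κ) : EuclideanSpace ℝ ι :=
  WithLp.toLp 2 (A.mulVec v)

/-- Weighted squared norm `‖v‖²_M = vᵀ M v`. -/
noncomputable def qnorm {ι : Type*} [Fintype ι] (M : Matrix ι ι ℝ)
    (v : EuclideanSpace ℝ ι) : ℝ :=
  ⟪v, act M v⟫

lemma inner_act_symm {n : ℕ} {M : Matrix (Fin n) (Fin n) ℝ} (hM : M.IsHermitian)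
    (u v : EuclideanSpace ℝ (Fin n)) : ⟪u, act M v⟫ = ⟪act M u, v⟫ := by
  have hMt : Mᵀ = M := by
    have := hM; rwa [Matrix.IsHermitian, Matrix.conjTranspose_eq_transpose_of_trivial] at this
  rw [PiLp.inner_apply, PiLp.inner_apply]
  simp only [RCLike.inner_apply, conj_trivial]
  show (M *ᵥ v.ofLp) ⬝ᵥ u.ofLp = v.ofLp ⬝ᵥ (M *ᵥ u.ofLp)
  rw [Matrix.dotProduct_mulVec, ← Matrix.mulVec_transpose, hMt]

lemma act_sub {n : ℕ} (M : Matrix (Fin n) (Fin n) ℝ) (u v : EuclideanSpace ℝ (Fin n)) :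
    act M (u - v) = act M u - act M v :=
  by ext i; simp [act, Matrix.mulVec_sub]

lemma act_add {n : ℕ} (M : Matrix (Fin n) (Fin n) ℝ) (u v : EuclideanSpace ℝ (Fin n)) :
    act M (u + v) = act M u + act M v :=
  by ext i; simp [act, Matrix.mulVec_add]

lemma act_smul {n : ℕ} (M : Matrix (Fin n) (Fin n) ℝ) (c : ℝ) (v : EuclideanSpace ℝ (Fin n)) :
    act M (c • v) = c • act M v :=
  by ext i; simp [act, Matrix.mulVec_smul]

lemma convex_grad_ineq {n : ℕ} (f : EuclideanSpace ℝ (Fin n) → ℝ)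
    (hconv : ConvexOn ℝ Set.univ f) (g x y : EuclideanSpace ℝ (Fin n))
    (hg : HasGradientAt f g x) : f x - f y ≤ ⟪g, x - y⟫ := by
  set φ : ℝ → ℝ := fun t => f (x + t • (y - x)) with hφdef
  have hline : HasDerivAt (fun t : ℝ => x + t • (y - x)) (y - x) 0 := by
    simpa using ((hasDerivAt_id (0:ℝ)).smul_const (y - x)).const_add x
  have hF : HasFDerivAt f (InnerProductSpace.toDual ℝ _ g) x :=
    hasGradientAt_iff_hasFDerivAt.mp hg
  have hF' : HasFDerivAt f (InnerProductSpace.toDual ℝ _ g) (x + (0:ℝ) • (y - x)) := by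
    simpa using hF
  have hφ : HasDerivAt φ ⟪g, y - x⟫ 0 := by
    have := hF'.comp_hasDerivAt 0 hline
    exact this
  have hslope : ∀ t ∈ Set.Ioc (0:ℝ) 1, slope φ 0 t ≤ f y - f x := by
    intro t ht
    have hconvt := hconv.2 (Set.mem_univ x) (Set.mem_univ y)
      (by linarith [ht.2] : (0:ℝ) ≤ 1 - t) (le_of_lt ht.1) (by ring)
    have hcomb : x + t • (y - x) = (1 - t) • x + t • y := by module
    have : φ t ≤ (1 - t) * f x + t * f y := by rw [hφdef]; simp only; rw [hcomb]; exact hconvt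
    have hφ0 : φ 0 = f x := by simp [hφdef]
    rw [slope_def_field, hφ0, sub_zero, div_le_iff₀ ht.1]
    nlinarith [ht.1]
  have htend : Filter.Tendsto (slope φ 0) (nhdsWithin (0:ℝ) (Set.Ioi 0)) (nhds ⟪g, y - x⟫) :=
    (hasDerivAt_iff_tendsto_slope.mp hφ).mono_left
      (nhdsWithin_mono 0 (fun t ht => Set.mem_compl_singleton_iff.mpr (ne_of_gt ht)))
  have hle : ⟪g, y - x⟫ ≤ f y - f x :=
    le_of_tendsto htend (Filter.eventually_of_mem
      (Ioc_mem_nhdsGT_of_mem ⟨le_refl 0, zero_lt_one⟩) hslope)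
  have h2 : ⟪g, x - y⟫ = -⟪g, y - x⟫ := by
    rw [show x - y = -(y - x) by abel, inner_neg_right]
  linarith [hle, h2.ge, h2.le]

lemma three_point {n : ℕ} (x s a b : EuclideanSpace ℝ (Fin n)) :
    ⟪x - b, x - s⟫ - ⟪x - a, x - s⟫
      = 1/2 * (‖s - a‖^2 - ‖s - b‖^2 + ‖x - b‖^2 - ‖x - a‖^2) := by
  simp only [← real_inner_self_eq_norm_sq, inner_sub_left, inner_sub_right]
  rw [real_inner_comm b x, real_inner_comm a x, real_inner_comm a s, real_inner_comm b s]
  ring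

lemma q_three {n : ℕ} {M : Matrix (Fin n) (Fin n) ℝ} (hM : M.IsHermitian)
    (x s k : EuclideanSpace ℝ (Fin n)) :
    qnorm M (s - k) - qnorm M (s - x) - qnorm M (x - k)
      = 2 * ⟪act M (x - k), s - x⟫ := by
  have h : s - k = (s - x) + (x - k) := by abel
  rw [qnorm, qnorm, qnorm, h, act_add, inner_add_left, inner_add_right, inner_add_right,
    inner_act_symm hM (s - x) (x - k), real_inner_comm (x - k) (act M (s - x)),
    inner_act_symm hM (x - k) (s - x)]
  ring

/-- Per-step bound on the smooth part (inequality (feq) in the proof of Theorem 1). -/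
theorem per_step_smooth_bound {n : ℕ}
    (f : EuclideanSpace ℝ (Fin n) → ℝ) (gradf : EuclideanSpace ℝ (Fin n))
    (hconv : ConvexOn ℝ Set.univ f)
    (Pinv : Matrix (Fin n) (Fin n) ℝ) (hP : Pinv.PosDef)
    (ρ η : ℝ) (hρ : 0 < ρ) (hη : 0 < η)
    (xk xk1 νk νk1 wk wk1 xs νs : EuclideanSpace ℝ (Fin n))
    (hgrad : HasGradientAt f gradf xk1)
    (hmin : ∀ z : EuclideanSpace ℝ (Fin n),
      f xk1 + ⟪wk, xk1 - νk⟫ + ρ / 2 * ‖xk1 - νk‖ ^ 2 + η / 2 * qnorm Pinv (xk1 - xk)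
        ≤ f z + ⟪wk, z - νk⟫ + ρ / 2 * ‖z - νk‖ ^ 2 + η / 2 * qnorm Pinv (z - xk))
    (hw : wk1 = wk + ρ • (xk1 - νk1))
    (hfeas : xs = νs) :
    f xk1 - f xs ≤ ⟪gradf, xk1 - xs⟫ ∧
    ⟪gradf, xk1 - xs⟫
      = -⟪wk1, xk1 - νs⟫
        + ρ / 2 * (‖νs - νk‖ ^ 2 - ‖νs - νk1‖ ^ 2 + ‖xk1 - νk1‖ ^ 2 - ‖xk1 - νk‖ ^ 2)
        + η / 2 * (qnorm Pinv (xs - xk) - qnorm Pinv (xs - xk1) - qnorm Pinv (xk1 - xk)) := by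
  have hM := hP.1
  subst hfeas
  constructor
  · exact convex_grad_ineq f hconv gradf xk1 xs hgrad
  -- stationarity: for every direction v, the derivative of the objective vanishes
  have hstat : ∀ v : EuclideanSpace ℝ (Fin n),
      ⟪gradf, v⟫ + (⟪wk, v⟫ + ρ * ⟪xk1 - νk, v⟫ + η * ⟪act Pinv (xk1 - xk), v⟫) = 0 := by
    intro v
    set A : ℝ := ⟪wk, v⟫ + ρ * ⟪xk1 - νk, v⟫ + η * ⟪act Pinv (xk1 - xk), v⟫ with hA
    set B : ℝ := ρ / 2 * ‖v‖^2 + η / 2 * qnorm Pinv v with hB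
    set K : ℝ := ⟪wk, xk1 - νk⟫ + ρ / 2 * ‖xk1 - νk‖^2 + η / 2 * qnorm Pinv (xk1 - xk) with hK
    set ψ : ℝ → ℝ := fun t =>
      f (xk1 + t • v) + ⟪wk, (xk1 + t • v) - νk⟫ + ρ / 2 * ‖(xk1 + t • v) - νk‖^2
        + η / 2 * qnorm Pinv ((xk1 + t • v) - xk) with hψ
    have hexp : ∀ t : ℝ, ψ t = f (xk1 + t • v) + (K + t * A + t^2 * B) := by
      intro t
      have e1 : ⟪wk, (xk1 + t • v) - νk⟫ = ⟪wk, xk1 - νk⟫ + t * ⟪wk, v⟫ := by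
        rw [show (xk1 + t • v) - νk = (xk1 - νk) + t • v by abel, inner_add_right,
          real_inner_smul_right]
      have e2 : ‖(xk1 + t • v) - νk‖^2
          = ‖xk1 - νk‖^2 + 2 * t * ⟪xk1 - νk, v⟫ + t^2 * ‖v‖^2 := by
        rw [show (xk1 + t • v) - νk = (xk1 - νk) + t • v by abel]
        rw [← real_inner_self_eq_norm_sq, ← real_inner_self_eq_norm_sq,
          ← real_inner_self_eq_norm_sq, inner_add_left, inner_add_right, inner_add_right,
          real_inner_smul_left, real_inner_smul_left, real_inner_smul_right,
          real_inner_smul_right, real_inner_comm (xk1 - νk) v]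
        ring
      have e3 : qnorm Pinv ((xk1 + t • v) - xk)
          = qnorm Pinv (xk1 - xk) + 2 * t * ⟪act Pinv (xk1 - xk), v⟫ + t^2 * qnorm Pinv v := by
        rw [qnorm, qnorm, qnorm, show (xk1 + t • v) - xk = (xk1 - xk) + t • v by abel,
          act_add, act_smul, inner_add_left, inner_add_right, inner_add_right,
          inner_smul_left, inner_smul_right, real_inner_smul_left, real_inner_smul_right,
          inner_act_symm hM (xk1 - xk) v, real_inner_comm v (act Pinv (xk1 - xk))]
        simp only [conj_trivial]
        ring
      rw [hψ]; simp only; rw [e1, e2, e3, hA, hB, hK]; ring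
    have hmin' : IsLocalMin ψ 0 := by
      apply Filter.Eventually.of_forall
      intro t
      have h0 : ψ 0 = f xk1 + ⟪wk, xk1 - νk⟫ + ρ / 2 * ‖xk1 - νk‖^2
          + η / 2 * qnorm Pinv (xk1 - xk) := by
        rw [hψ]; simp
      rw [h0, hψ]
      exact hmin (xk1 + t • v)
    have hline : HasDerivAt (fun t : ℝ => xk1 + t • v) v 0 := by
      simpa using ((hasDerivAt_id (0:ℝ)).smul_const v).const_add xk1
    have hF' : HasFDerivAt f (InnerProductSpace.toDual ℝ _ gradf) (xk1 + (0:ℝ) • v) := by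
      simpa using hasGradientAt_iff_hasFDerivAt.mp hgrad
    have hfcomp : HasDerivAt (fun t : ℝ => f (xk1 + t • v)) ⟪gradf, v⟫ 0 := by
      have := hF'.comp_hasDerivAt 0 hline
      exact this
    have hpoly : HasDerivAt (fun t : ℝ => K + t * A + t^2 * B) A 0 := by
      have h1 : HasDerivAt (fun t : ℝ => t * A) A 0 := by
        simpa using (hasDerivAt_id (0:ℝ)).mul_const A
      have h2 : HasDerivAt (fun t : ℝ => t^2 * B) 0 0 := by
        simpa using (hasDerivAt_pow 2 (0:ℝ)).mul_const B
      have h := (h1.const_add K).add h2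
      simp only [add_zero] at h
      exact h
    have hψd : HasDerivAt ψ (⟪gradf, v⟫ + A) 0 := by
      have := hfcomp.add hpoly
      have heq : (fun t : ℝ => f (xk1 + t • v) + (K + t * A + t^2 * B)) = ψ := by
        funext t; rw [hexp t]
      rw [← heq]; exact this
    exact hmin'.hasDerivAt_eq_zero hψd
  -- from stationarity, identify the gradient
  set G : EuclideanSpace ℝ (Fin n) :=
    gradf + (wk + ρ • (xk1 - νk) + η • act Pinv (xk1 - xk)) with hG
  have hG0 : G = 0 := by
    have h := hstat G
    rw [← inner_self_eq_zero (𝕜 := ℝ) (x := G)]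
    nth_rewrite 1 [hG]
    rw [inner_add_left, inner_add_left, inner_add_left, real_inner_smul_left, real_inner_smul_left]
    linarith [h]
  have hgrad_eq : gradf = -(wk + ρ • (xk1 - νk) + η • act Pinv (xk1 - xk)) := by
    have := hG0
    rw [hG] at this
    linear_combination (norm := module) this
  -- now pure algebra
  set d : EuclideanSpace ℝ (Fin n) := xk1 - xs with hd
  have hL : ⟪gradf, d⟫ = -⟪wk, d⟫ - ρ * ⟪xk1 - νk, d⟫ - η * ⟪act Pinv (xk1 - xk), d⟫ := by
    rw [hgrad_eq, inner_neg_left, inner_add_left, inner_add_left, real_inner_smul_left,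
      real_inner_smul_left]
    ring
  have hw1 : -⟪wk1, d⟫ = -⟪wk, d⟫ - ρ * ⟪xk1 - νk1, d⟫ := by
    rw [hw, inner_add_left, real_inner_smul_left]; ring
  have h3 := three_point xk1 xs νk νk1
  have hq := q_three hM xk1 xs xk
  have hqd : ⟪act Pinv (xk1 - xk), xs - xk1⟫ = -⟪act Pinv (xk1 - xk), d⟫ := by
    rw [hd, show xs - xk1 = -(xk1 - xs) by abel, inner_neg_right]
  rw [hd] at *
  linear_combination hL - hw1 + ρ * h3 - (η/2) * hq - η * hqd
end

section
/- Combined per-step inequality (inequality (thmeqn)). Under the online ADMM–EKF iterations with convex differentiable f_k and proper convex g, and with x⋆ = ν⋆, for every k: f_k(x_{k+1}) + g(ν_{k+1}) − (f_k(x⋆) + g(ν⋆)) ≤ (1/(2ρ))(‖w_k‖² − ‖w_{k+1}‖²) − (ρ/2)‖x_{k+1} − ν_k‖² + (ρ/2)(‖ν⋆ − ν_k‖² − ‖ν⋆ − ν_{k+1}‖²) + (η/2)(‖x⋆ − x_k‖²_{P_k⁻¹} − ‖x⋆ − x_{k+1}‖²_{P_k⁻¹} − ‖x_{k+1} − x_k‖²_{P_k⁻¹}).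 -/
open Finset Matrix
open scoped RealInnerProductSpace

variable {ι : Type*} [Fintype ι]

lemma qnorm_nonneg {M : Matrix ι ι ℝ} (hM : M.PosDef) (v : EuclideanSpace ℝ ι) :
    0 ≤ qnorm M v := by
  have h := hM.posSemidef.dotProduct_mulVec_nonneg v.ofLp
  simpa [qnorm, act, dotProduct, PiLp.inner_apply, mul_comm] using h

lemma act_add_smul (M : Matrix ι ι ℝ) (u d : EuclideanSpace ℝ ι) (t : ℝ) :
    act M (u + t • d) = act M u + t • act M d := by
  ext i
  simp [act, Matrix.mulVec, dotProduct, mul_add, Finset.sum_add_distrib,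
    Finset.mul_sum, mul_left_comm]

lemma qnorm_quad (M : Matrix ι ι ℝ) (u d : EuclideanSpace ℝ ι) (t : ℝ) :
    qnorm M (u + t • d) =
      qnorm M u + t * (⟪u, act M d⟫ + ⟪d, act M u⟫) + t ^ 2 * qnorm M d := by
  rw [qnorm, act_add_smul, qnorm, qnorm]
  simp only [inner_add_left, inner_add_right, real_inner_smul_left, real_inner_smul_right]
  ring

lemma qnorm_comb (M : Matrix ι ι ℝ) (u v : EuclideanSpace ℝ ι) (t : ℝ) :
    qnorm M (u + t • (v - u)) =
      (1 - t) * qnorm M u + t * qnorm M v - t * (1 - t) * qnorm M (v - u) := by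
  have h1 := qnorm_quad M u (v - u) t
  have h2 := qnorm_quad M u (v - u) 1
  have e : u + (1 : ℝ) • (v - u) = v := by module
  rw [e] at h2
  rw [h1]
  linear_combination -t * h2

lemma qnorm_comb' (M : Matrix ι ι ℝ) (u v c : EuclideanSpace ℝ ι) (t : ℝ) :
    qnorm M (u + t • (v - u) - c) =
      (1 - t) * qnorm M (u - c) + t * qnorm M (v - c) - t * (1 - t) * qnorm M (v - u) := by
  have h := qnorm_comb M (u - c) (v - c) t
  have e2 : (v - c) - (u - c) = v - u := by abel
  rw [e2] at h
  have e1 : (u - c) + t • (v - u) = u + t • (v - u) - c := by module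
  rw [e1] at h
  exact h

lemma qnorm_one [DecidableEq ι] (v : EuclideanSpace ℝ ι) :
    qnorm (1 : Matrix ι ι ℝ) v = ‖v‖ ^ 2 := by
  have h : act (1 : Matrix ι ι ℝ) v = v := by
    ext i; simp [act, Matrix.mulVec, dotProduct, Matrix.one_apply]
  rw [qnorm, h, real_inner_self_eq_norm_sq]

lemma norm_sq_comb [DecidableEq ι] (u v c : EuclideanSpace ℝ ι) (t : ℝ) :
    ‖u + t • (v - u) - c‖ ^ 2 =
      (1 - t) * ‖u - c‖ ^ 2 + t * ‖v - c‖ ^ 2 - t * (1 - t) * ‖v - u‖ ^ 2 := by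
  rw [← qnorm_one (u + t • (v - u) - c), ← qnorm_one (u - c), ← qnorm_one (v - c),
    ← qnorm_one (v - u)]
  exact qnorm_comb' 1 u v c t

lemma inner_comb (w u v c : EuclideanSpace ℝ ι) (t : ℝ) :
    ⟪w, u + t • (v - u) - c⟫ = (1 - t) * ⟪w, u - c⟫ + t * ⟪w, v - c⟫ := by
  simp only [inner_sub_right, inner_add_right, real_inner_smul_right]
  ring

lemma inner_comb' (w u v c : EuclideanSpace ℝ ι) (t : ℝ) :
    ⟪w, c - (u + t • (v - u))⟫ = (1 - t) * ⟪w, c - u⟫ + t * ⟪w, c - v⟫ := by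
  simp only [inner_sub_right, inner_add_right, real_inner_smul_right]
  ring

lemma le_of_forall_scaled (Q D : ℝ) (hQ : 0 ≤ Q) (hD : 0 ≤ D)
    (h : ∀ t : ℝ, 0 < t → t < 1 → (1 - t) * Q ≤ D) : Q ≤ D := by
  by_contra hc
  push_neg at hc
  have hQ0 : 0 < Q := lt_of_le_of_lt hD hc
  have ht0 : 0 < (Q - D) / (2 * Q) := div_pos (by linarith) (by positivity)
  have ht1 : (Q - D) / (2 * Q) < 1 := by
    rw [div_lt_one (by positivity)]; linarith
  have ht := h _ ht0 ht1
  have he : (1 - (Q - D) / (2 * Q)) * Q = Q - (Q - D) / 2 := by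
    field_simp
  rw [he] at ht; linarith

lemma strong_min {E : Type*} [NormedAddCommGroup E] [InnerProductSpace ℝ E]
    {φ ψ Q : E → ℝ} (hφ : ConvexOn ℝ Set.univ φ) (hQ : ∀ d, 0 ≤ Q d)
    (hcomb : ∀ u v : E, ∀ t : ℝ, 0 < t → t < 1 →
      ψ (u + t • (v - u)) = (1 - t) * ψ u + t * ψ v - t * (1 - t) * Q (v - u))
    (xh : E) (hmin : ∀ z, φ xh + ψ xh ≤ φ z + ψ z) (z : E) :
    φ xh + ψ xh + Q (z - xh) ≤ φ z + ψ z := by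
  set A := φ xh + ψ xh with hA
  set B := φ z + ψ z with hB
  have hD : 0 ≤ B - A := by linarith [hmin z]
  have key : ∀ t : ℝ, 0 < t → t < 1 → (1 - t) * Q (z - xh) ≤ B - A := by
    intro t ht0 ht1
    have hφc : φ (xh + t • (z - xh)) ≤ (1 - t) * φ xh + t * φ z := by
      have h := hφ.2 (Set.mem_univ xh) (Set.mem_univ z)
        (show (0:ℝ) ≤ 1 - t by linarith) (le_of_lt ht0)
        (show (1 - t) + t = 1 by ring)
      have e : (1 - t) • xh + t • z = xh + t • (z - xh) := by module
      rwa [e] at h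
    have hψc := hcomb xh z t ht0 ht1
    have h5 : A ≤ A + t * ((B - A) - (1 - t) * Q (z - xh)) := by
      calc A ≤ φ (xh + t • (z - xh)) + ψ (xh + t • (z - xh)) := hmin _
        _ ≤ ((1 - t) * φ xh + t * φ z) +
            ((1 - t) * ψ xh + t * ψ z - t * (1 - t) * Q (z - xh)) :=
              add_le_add hφc (le_of_eq hψc)
        _ = A + t * ((B - A) - (1 - t) * Q (z - xh)) := by rw [hA, hB]; ring
    have h6 : 0 ≤ t * ((B - A) - (1 - t) * Q (z - xh)) := by linarith
    have h7 := (mul_nonneg_iff_of_pos_left ht0).mp h6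
    linarith
  linarith [le_of_forall_scaled _ _ (hQ (z - xh)) hD key]


/-- Combined per-step inequality (thmeqn) for the online ADMM–EKF iterations. -/
theorem combined_per_step_inequality {n : ℕ}
    -- convex differentiable losses with gradient `f'`
    (f : ℕ → EuclideanSpace ℝ (Fin n) → ℝ)
    (f' : ℕ → EuclideanSpace ℝ (Fin n) → EuclideanSpace ℝ (Fin n))
    (hconv : ∀ k, ConvexOn ℝ Set.univ (f k))
    (hgrad : ∀ k z, HasGradientAt (f k) (f' k z) z)
    -- proper convex regularizer
    (g : EuclideanSpace ℝ (Fin n) → ℝ) (hg : ConvexOn ℝ Set.univ g)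
    -- the (inverses of the) covariance matrices
    (Pinv : ℕ → Matrix (Fin n) (Fin n) ℝ) (hP : ∀ k, (Pinv k).PosDef)
    (ρ η : ℝ) (hρ : 0 < ρ) (hη : 0 < η)
    -- the online ADMM–EKF iterates
    (x ν w : ℕ → EuclideanSpace ℝ (Fin n))
    (hν0 : ν 0 = x 0) (hw0 : w 0 = 0)
    (hxup : ∀ k, ∀ z : EuclideanSpace ℝ (Fin n),
      f k (x (k + 1)) + ⟪w k, x (k + 1) - ν k⟫ + ρ / 2 * ‖x (k + 1) - ν k‖ ^ 2
          + η / 2 * qnorm (Pinv k) (x (k + 1) - x k)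
        ≤ f k z + ⟪w k, z - ν k⟫ + ρ / 2 * ‖z - ν k‖ ^ 2
          + η / 2 * qnorm (Pinv k) (z - x k))
    (hνup : ∀ k, ∀ z : EuclideanSpace ℝ (Fin n),
      g (ν (k + 1)) + ⟪w k, x (k + 1) - ν (k + 1)⟫ + ρ / 2 * ‖x (k + 1) - ν (k + 1)‖ ^ 2
        ≤ g z + ⟪w k, x (k + 1) - z⟫ + ρ / 2 * ‖x (k + 1) - z‖ ^ 2)
    (hwup : ∀ k, w (k + 1) = w k + ρ • (x (k + 1) - ν (k + 1)))
    -- any feasible point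
    (xs νs : EuclideanSpace ℝ (Fin n)) (hfeas : xs = νs) :
    ∀ k : ℕ,
      f k (x (k + 1)) + g (ν (k + 1)) - (f k xs + g νs)
        ≤ 1 / (2 * ρ) * (‖w k‖ ^ 2 - ‖w (k + 1)‖ ^ 2)
          - ρ / 2 * ‖x (k + 1) - ν k‖ ^ 2
          + ρ / 2 * (‖νs - ν k‖ ^ 2 - ‖νs - ν (k + 1)‖ ^ 2)
          + η / 2 * (qnorm (Pinv k) (xs - x k) - qnorm (Pinv k) (xs - x (k + 1))
              - qnorm (Pinv k) (x (k + 1) - x k)) := by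
  subst hfeas
  intro k
  have hQ1 : ∀ d : EuclideanSpace ℝ (Fin n),
      0 ≤ ρ / 2 * ‖d‖ ^ 2 + η / 2 * qnorm (Pinv k) d := by
    intro d
    have h := qnorm_nonneg (hP k) d
    have : (0:ℝ) ≤ ρ / 2 * ‖d‖ ^ 2 := by positivity
    nlinarith
  have s1 := strong_min (E := EuclideanSpace ℝ (Fin n)) (φ := f k)
      (ψ := fun z => ⟪w k, z - ν k⟫ + ρ / 2 * ‖z - ν k‖ ^ 2
        + η / 2 * qnorm (Pinv k) (z - x k))
      (Q := fun d => ρ / 2 * ‖d‖ ^ 2 + η / 2 * qnorm (Pinv k) d)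
      (hconv k) hQ1
      (by
        intro u v t ht0 ht1
        rw [inner_comb, norm_sq_comb, qnorm_comb']
        ring)
      (x (k + 1))
      (by
        intro z
        have h := hxup k z
        linarith)
      xs
  have s2 := strong_min (E := EuclideanSpace ℝ (Fin n)) (φ := g)
      (ψ := fun z => ⟪w k, x (k + 1) - z⟫ + ρ / 2 * ‖x (k + 1) - z‖ ^ 2)
      (Q := fun d => ρ / 2 * ‖d‖ ^ 2)
      hg (fun d => by positivity)
      (by
        intro u v t ht0 ht1
        rw [inner_comb', norm_sub_rev (x (k + 1)) (u + t • (v - u)), norm_sq_comb,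
          norm_sub_rev u (x (k + 1)), norm_sub_rev v (x (k + 1))]
        ring)
      (ν (k + 1))
      (by
        intro z
        have h := hνup k z
        linarith)
      xs
  have E3 : ‖w (k + 1)‖ ^ 2 = ‖w k‖ ^ 2 + 2 * ρ * ⟪w k, x (k + 1) - ν (k + 1)⟫
      + ρ ^ 2 * ‖x (k + 1) - ν (k + 1)‖ ^ 2 := by
    rw [hwup k, norm_add_sq_real, real_inner_smul_right, norm_smul, Real.norm_eq_abs,
      mul_pow, sq_abs]
    ring
  have E4 : 1 / (2 * ρ) * (‖w k‖ ^ 2 - ‖w (k + 1)‖ ^ 2)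
      = -⟪w k, x (k + 1) - ν (k + 1)⟫ - ρ / 2 * ‖x (k + 1) - ν (k + 1)‖ ^ 2 := by
    rw [E3]
    field_simp
    ring
  have Eid : ⟪w k, xs - ν k⟫ + ⟪w k, x (k + 1) - xs⟫ - ⟪w k, x (k + 1) - ν k⟫
      = (0:ℝ) := by
    simp only [inner_sub_right]
    ring
  have E2 : ρ / 2 * ‖xs - x (k + 1)‖ ^ 2 = ρ / 2 * ‖x (k + 1) - xs‖ ^ 2 := by
    rw [norm_sub_rev]
  linarith [s1, s2, E4, Eid, E2]
end
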